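/- Let 0 < s < 1. There is a constant C = C(s) such that for all N ≥ 1 the following holds. If ξ₁, ξ₂, ξ₃, ξ₄, ξ₅ ∈ ℝ satisfy |ξ₁| ≥ N, |ξ_j| ≤ N for j = 2,3,4,5, and |ξ₂| + |ξ₃| + |ξ₄| + |ξ₅| ≤ |ξ₁|/2, then |1 − m_N(ξ₁ + ξ₂ + ξ₃ + ξ₄ + ξ₅) / (m_N(ξ₁) m_N(ξ₂) m_N(ξ₃) m_N(ξ₄) m_N(ξ₅))| ≤ C (|ξ₂| + |ξ₃| + |ξ₄| + |ξ₅|) / |ξ₁|. -/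

import Mathlib

open MeasureTheory Real Set
open scoped ENNReal NNReal

noncomputable section

/-- `f : ℝ → ℂ` is a Schwartz function. -/
def IsSchwartz (f : ℝ → ℂ) : Prop := ∃ g : SchwartzMap ℝ ℂ, ∀ x, f x = g x

/-- The Fourier transform `𝓕 f (ξ) = ∫ e^{-2πi x ξ} f x dx`. -/
def FT (f : ℝ → ℂ) : ℝ → ℂ := FourierTransform.fourier f

/-- The inverse Fourier transform. -/
def FTinv (f : ℝ → ℂ) : ℝ → ℂ := FourierTransformInv.fourierInv f

/-- The `H^s` Sobolev norm. -/
def HNorm (s : ℝ) (f : ℝ → ℂ) : ℝ :=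
  (∫ ξ : ℝ, (1 + ξ ^ 2) ^ s * ‖FT f ξ‖ ^ 2) ^ (1/2 : ℝ)

/-- The mixed norm `‖u‖_{L^p_t L^q_x (J × ℝ)}`. -/
def mixedNorm (p q : ℝ≥0∞) (J : Set ℝ) (u : ℝ → ℝ → ℂ) : ℝ≥0∞ :=
  if p = ∞ then essSup (fun t => eLpNorm (u t) q volume) (volume.restrict J)
  else (∫⁻ t in J, (eLpNorm (u t) q volume) ^ p.toReal) ^ (1 / p.toReal)

/-- `(p,q)` is an admissible Strichartz pair: `2/p + 1/q = 1/2`, `4 ≤ p ≤ ∞`. -/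
def Admissible (p q : ℝ≥0∞) : Prop := 2 / p + 1 / q = 1 / 2 ∧ 4 ≤ p

/-- The Strichartz norm `S⁰(J × ℝ)`. -/
def SNorm (J : Set ℝ) (u : ℝ → ℝ → ℂ) : ℝ≥0∞ :=
  ⨆ (p : ℝ≥0∞) (q : ℝ≥0∞) (_ : Admissible p q), mixedNorm p q J u

/-- The I-method multiplier `m_N(ξ) = min(1, (N/|ξ|)^{1-s})`, `m_N(0) = 1`. -/
def mI (s N ξ : ℝ) : ℝ := if ξ = 0 then 1 else min 1 ((N / |ξ|) ^ (1 - s))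

/-- The I-operator `I_N f = 𝓕⁻¹ (m_N ⬝ 𝓕 f)`. -/
def Iop (s N : ℝ) (f : ℝ → ℂ) : ℝ → ℂ :=
  FTinv (fun ξ => (mI s N ξ : ℂ) * FT f ξ)

/-- The operator `⟨∇⟩ f = 𝓕⁻¹ ((1+ξ²)^{1/2} 𝓕 f)`. -/
def jb (f : ℝ → ℂ) : ℝ → ℂ :=
  FTinv (fun ξ => (((1 + ξ ^ 2) ^ (1/2 : ℝ) : ℝ) : ℂ) * FT f ξ)

/-- The Littlewood--Paley projection `P_{> M}`. -/
def Pgt (M : ℝ) (f : ℝ → ℂ) : ℝ → ℂ :=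
  FTinv (fun ξ => if M < |ξ| then FT f ξ else 0)

/-- The free Schrödinger propagator `e^{itΔ}`. -/
def schrodinger (t : ℝ) (f : ℝ → ℂ) : ℝ → ℂ :=
  FTinv (fun ξ => Complex.exp ((-(4 * π ^ 2 * t * ξ ^ 2) : ℝ) * Complex.I) * FT f ξ)

/-- `u` solves the quintic defocusing NLS `i ∂_t u + ∂_x² u = |u|⁴ u` pointwise on `S × ℝ`. -/
def SolvesNLS (u : ℝ → ℝ → ℂ) (S : Set ℝ) : Prop :=
  ∀ t ∈ S, ∀ x : ℝ,
    Complex.I * deriv (fun τ => u τ x) t + deriv (deriv (u t)) x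
      = (‖u t x‖ : ℂ) ^ 4 * u t x

/-- `u` is smooth on `ℝ × ℝ` and `u(t,·)` is Schwartz for every `t`. -/
def NiceSolution (u : ℝ → ℝ → ℂ) : Prop :=
  ContDiff ℝ (⊤ : ℕ∞) (Function.uncurry u) ∧ ∀ t, IsSchwartz (u t)

/-- The (modified) energy `E(f) = ½∫|∂_x f|² + ⅙∫|f|⁶`. -/
def energy (f : ℝ → ℂ) : ℝ :=
  (1/2) * (∫ x : ℝ, ‖deriv f x‖ ^ 2) + (1/6) * (∫ x : ℝ, ‖f x‖ ^ 6)

end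


/-- Auxiliary: for `0 < a ≤ 1` and `0 ≤ ρ`, `|1 - ρ^a| ≤ |1 - ρ|`. -/
lemma abs_one_sub_rpow_le (a ρ : ℝ) (ha0 : 0 < a) (ha1 : a ≤ 1) (hρ : 0 ≤ ρ) :
    |1 - ρ ^ a| ≤ |1 - ρ| := by
  rcases eq_or_lt_of_le hρ with h0 | h0
  · rw [← h0, Real.zero_rpow ha0.ne']
  rcases le_total ρ 1 with hle | hge
  · have h1 : ρ ^ a ≤ 1 := Real.rpow_le_one hρ hle ha0.le
    have h2 : ρ ≤ ρ ^ a := by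
      calc ρ = ρ ^ (1:ℝ) := (Real.rpow_one ρ).symm
      _ ≤ ρ ^ a := Real.rpow_le_rpow_of_exponent_ge h0 hle ha1
    rw [abs_of_nonneg (by linarith), abs_of_nonneg (by linarith)]
    linarith
  · have h1 : 1 ≤ ρ ^ a := Real.one_le_rpow hge ha0.le
    have h2 : ρ ^ a ≤ ρ := by
      calc ρ ^ a ≤ ρ ^ (1:ℝ) := Real.rpow_le_rpow_of_exponent_le hge ha1
      _ = ρ := Real.rpow_one ρ
    rw [abs_of_nonpos (by linarith), abs_of_nonpos (by linarith)]
    linarith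

/-- commutator bound for the multiplier `m_N` when one frequency
    dominates. -/
theorem multiplier_mean_value_bound (s : ℝ) (hs0 : 0 < s) (hs1 : s < 1) :
    ∃ C : ℝ, 0 < C ∧
      ∀ (N : ℝ), 1 ≤ N →
      ∀ ξ₁ ξ₂ ξ₃ ξ₄ ξ₅ : ℝ,
        N ≤ |ξ₁| → |ξ₂| ≤ N → |ξ₃| ≤ N → |ξ₄| ≤ N → |ξ₅| ≤ N →
        |ξ₂| + |ξ₃| + |ξ₄| + |ξ₅| ≤ |ξ₁| / 2 →
        |1 - mI s N (ξ₁ + ξ₂ + ξ₃ + ξ₄ + ξ₅) /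
            (mI s N ξ₁ * mI s N ξ₂ * mI s N ξ₃ * mI s N ξ₄ * mI s N ξ₅)|
          ≤ C * (|ξ₂| + |ξ₃| + |ξ₄| + |ξ₅|) / |ξ₁| := by
  refine ⟨2, by norm_num, ?_⟩
  intro N hN ξ₁ ξ₂ ξ₃ ξ₄ ξ₅ h1 h2 h3 h4 h5 hsum
  have ha0 : 0 < 1 - s := by linarith
  have ha1 : 1 - s ≤ 1 := by linarith
  set a := 1 - s with ha
  set σ := ξ₂ + ξ₃ + ξ₄ + ξ₅ with hσ
  set D := |ξ₂| + |ξ₃| + |ξ₄| + |ξ₅| with hD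
  have hD0 : 0 ≤ D := by positivity
  have hσD : |σ| ≤ D := by
    calc |σ| ≤ |ξ₂ + ξ₃ + ξ₄| + |ξ₅| := abs_add_le _ _
    _ ≤ (|ξ₂ + ξ₃| + |ξ₄|) + |ξ₅| := by gcongr; exact abs_add_le _ _
    _ ≤ ((|ξ₂| + |ξ₃|) + |ξ₄|) + |ξ₅| := by gcongr; exact abs_add_le _ _
    _ = D := by ring
  have hN0 : 0 < N := lt_of_lt_of_le one_pos hN
  have hξ1pos : 0 < |ξ₁| := lt_of_lt_of_le hN0 h1
  have hξ1ne : ξ₁ ≠ 0 := fun h => by simp [h] at hξ1pos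
  have hsmall : ∀ ξ : ℝ, |ξ| ≤ N → mI s N ξ = 1 := by
    intro ξ hξ
    unfold mI
    split
    · rfl
    · rename_i hne
      have hpos : 0 < |ξ| := abs_pos.2 hne
      have h1' : (1:ℝ) ≤ N / |ξ| := (one_le_div hpos).2 hξ
      have : (1:ℝ) ≤ (N / |ξ|) ^ a := Real.one_le_rpow h1' ha0.le
      exact min_eq_left this
  have hm1 : mI s N ξ₁ = (N / |ξ₁|) ^ a := by
    unfold mI
    rw [if_neg hξ1ne]
    exact min_eq_right (Real.rpow_le_one (by positivity)
      ((div_le_one hξ1pos).2 h1) ha0.le)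
  have hm1pos : 0 < (N / |ξ₁|) ^ a := Real.rpow_pos_of_pos (by positivity) _
  set ξ := ξ₁ + σ with hξdef
  have hξlow : |ξ₁| / 2 ≤ |ξ| := by
    have : |ξ₁| ≤ |ξ| + |σ| := by
      calc |ξ₁| = |ξ - σ| := by rw [hξdef]; ring_nf
      _ ≤ |ξ| + |σ| := abs_sub _ _
    have hσhalf : |σ| ≤ |ξ₁| / 2 := le_trans hσD hsum
    linarith
  have hξpos : 0 < |ξ| := lt_of_lt_of_le (by linarith) hξlow
  have hξne : ξ ≠ 0 := fun h => by simp [h] at hξpos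
  have habs : abs (|ξ| - |ξ₁|) ≤ D := by
    calc abs (|ξ| - |ξ₁|) ≤ |ξ - ξ₁| := abs_abs_sub_abs_le_abs_sub _ _
    _ = |σ| := by rw [hξdef]; ring_nf
    _ ≤ D := hσD
  have key : ∀ ρ : ℝ, 0 ≤ ρ → |ρ - 1| ≤ 2 * D / |ξ₁| →
      |1 - ρ ^ a| ≤ 2 * D / |ξ₁| := by
    intro ρ hρ hclose
    calc |1 - ρ ^ a| ≤ |1 - ρ| := abs_one_sub_rpow_le a ρ ha0 ha1 hρ
    _ = |ρ - 1| := abs_sub_comm _ _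
    _ ≤ 2 * D / |ξ₁| := hclose
  rw [hsmall ξ₂ h2, hsmall ξ₃ h3, hsmall ξ₄ h4, hsmall ξ₅ h5, hm1]
  have hsame : ξ₁ + ξ₂ + ξ₃ + ξ₄ + ξ₅ = ξ := by rw [hξdef, hσ]; ring
  rw [hsame]
  by_cases hc : N ≤ |ξ|
  · have hmξ : mI s N ξ = (N / |ξ|) ^ a := by
      unfold mI
      rw [if_neg hξne]
      exact min_eq_right (Real.rpow_le_one (by positivity)
        ((div_le_one hξpos).2 hc) ha0.le)
    have hratio : (N / |ξ|) ^ a / ((N / |ξ₁|) ^ a * 1 * 1 * 1 * 1)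
        = (|ξ₁| / |ξ|) ^ a := by
      rw [mul_one, mul_one, mul_one, mul_one,
        ← Real.div_rpow (by positivity) (by positivity)]
      congr 1
      field_simp
    rw [hmξ, hratio]
    apply key _ (by positivity)
    have h1' : abs (|ξ₁| / |ξ| - 1) = abs (|ξ₁| - |ξ|) / |ξ| := by
      rw [div_sub_one hξpos.ne', abs_div, abs_of_pos hξpos]
    rw [h1']
    have h2' : abs (|ξ₁| - |ξ|) ≤ D := by rw [abs_sub_comm]; exact habs
    rw [div_le_div_iff₀ hξpos hξ1pos]
    nlinarith [mul_le_mul_of_nonneg_left hξlow (le_trans (abs_nonneg _) h2' : (0:ℝ) ≤ D)]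
  · push_neg at hc
    have hmξ : mI s N ξ = 1 := hsmall ξ hc.le
    have hratio : mI s N ξ / ((N / |ξ₁|) ^ a * 1 * 1 * 1 * 1)
        = (|ξ₁| / N) ^ a := by
      rw [hmξ, mul_one, mul_one, mul_one, mul_one, one_div,
        ← Real.inv_rpow (by positivity), inv_div]
    rw [hratio]
    apply key _ (by positivity)
    have ht1 : 1 ≤ |ξ₁| / N := (one_le_div hN0).2 h1
    have hupper : |ξ₁| ≤ N + D := by
      have : |ξ₁| - |ξ| ≤ abs (|ξ₁| - |ξ|) := le_abs_self _
      have h2' : abs (|ξ₁| - |ξ|) ≤ D := by rw [abs_sub_comm]; exact habs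
      linarith
    have hξ1le : |ξ₁| ≤ 2 * N := by
      have hσhalf : |σ| ≤ |ξ₁| / 2 := le_trans hσD hsum
      have : |ξ₁| ≤ |ξ| + |σ| := by
        calc |ξ₁| = |ξ - σ| := by rw [hξdef]; ring_nf
        _ ≤ |ξ| + |σ| := abs_sub _ _
      linarith
    rw [abs_of_nonneg (by linarith : (0:ℝ) ≤ |ξ₁| / N - 1)]
    rw [div_sub_one hN0.ne', div_le_div_iff₀ hN0 hξ1pos]
    nlinarith
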